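/- Let $f : (\mathbb{Z}/2)^4 \to (\mathbb{Z}/2)^2$ be a function such that for all pairwise distinct $p_1, p_2, p_3, p_4 \in (\mathbb{Z}/2)^4$ with $p_1+p_2+p_3+p_4 = 0$, one has $f(p_1)+f(p_2)+f(p_3)+f(p_4) = 0$. Then the image of $f$ does not consist of exactly three elements. -/

import Mathlib

theorem range_not_three_of_quad_preserving
    (f : (Fin 4 → ZMod 2) → (Fin 2 → ZMod 2))
    (hf : ∀ p1 p2 p3 p4 : Fin 4 → ZMod 2,
      p1 ≠ p2 → p1 ≠ p3 → p1 ≠ p4 → p2 ≠ p3 → p2 ≠ p4 → p3 ≠ p4 →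
      p1 + p2 + p3 + p4 = 0 → f p1 + f p2 + f p3 + f p4 = 0) :
    (Finset.univ.image f).card ≠ 3 := by
  intro h3
  have L1 : ∀ a b cc d : ZMod 2, a + b + cc + d = 0 → d = a + b + cc := by decide
  have L2 : ∀ x y : ZMod 2, y = x + y + x := by decide
  have L3 : ∀ x y : ZMod 2, y = y + x + x := by decide
  have L4 : ∀ x y : ZMod 2, y = x + x + y := by decide
  have L5 : ∀ a b : ZMod 2, a + b = 0 → a = b := by decide
  have L6 : ∀ a b cc : ZMod 2, (a + cc) + (b + cc) = (a + b + cc) + cc := by decide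
  have L7 : ∀ a cc : ZMod 2, a + cc + cc = a := by decide
  have add_self4 : ∀ v : Fin 4 → ZMod 2, v + v = 0 := fun v => by
    funext i; exact CharTwo.add_self_eq_zero _
  have add_self2 : ∀ v : Fin 2 → ZMod 2, v + v = 0 := fun v => by
    funext i; exact CharTwo.add_self_eq_zero _
  set c := f 0 with hc
  have key : ∀ p q : Fin 4 → ZMod 2, f (p + q) = f p + f q + c := by
    intro p q
    by_cases hp0 : p = 0
    · subst hp0; rw [zero_add]; funext i; exact L2 (c i) (f q i)
    by_cases hq0 : q = 0
    · subst hq0; rw [add_zero]; funext i; exact L3 (c i) (f p i)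
    by_cases hpq : p = q
    · subst hpq; rw [add_self4]; funext i; exact L4 (f p i) (c i)
    have h := hf p q 0 (p + q) hpq hp0
      (fun h => hq0 (left_eq_add.mp h)) hq0
      (fun h => hp0 (right_eq_add.mp h))
      (fun h => hpq (funext fun i => L5 _ _ (congrFun h.symm i)))
      (by rw [add_zero]; exact add_self4 _)
    funext i; exact L1 _ _ _ _ (congrFun h i)
  set g : (Fin 4 → ZMod 2) → (Fin 2 → ZMod 2) := fun x => f x + c with hg
  set S := Finset.univ.image g with hSdef
  have hS : S.card = 3 := by
    have hfg : (fun x => g x + c) = f := by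
      funext x; funext i; exact L7 (f x i) (c i)
    have himg : S.image (fun y => y + c) = Finset.univ.image f := by
      rw [hSdef, Finset.image_image]
      exact congrArg (Finset.image · Finset.univ) hfg
    have hinj : Function.Injective (fun y : Fin 2 → ZMod 2 => y + c) :=
      fun y z h => by
        funext i
        have := congrFun h i
        simpa using congrArg (· + c i) this
    have := Finset.card_image_of_injective S hinj
    rw [himg, h3] at this
    exact this.symm
  have h0 : (0 : Fin 2 → ZMod 2) ∈ S := by
    refine Finset.mem_image.mpr ⟨0, Finset.mem_univ _, ?_⟩
    show f 0 + c = 0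
    rw [← hc]; exact add_self2 c
  have hclosed : ∀ a ∈ S, ∀ b ∈ S, a + b ∈ S := by
    intro a ha b hb
    obtain ⟨x, -, rfl⟩ := Finset.mem_image.mp ha
    obtain ⟨y, -, rfl⟩ := Finset.mem_image.mp hb
    refine Finset.mem_image.mpr ⟨x + y, Finset.mem_univ _, ?_⟩
    show f (x + y) + c = g x + g y
    rw [key]
    funext i; exact (L6 (f x i) (f y i) (c i)).symm
  have h2 : (S.erase 0).card = 2 := by
    rw [Finset.card_erase_of_mem h0, hS]
  obtain ⟨a, b, hab, hset⟩ := Finset.card_eq_two.mp h2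
  have haS : a ∈ S := Finset.mem_of_mem_erase (hset ▸ Finset.mem_insert_self a {b})
  have hbS : b ∈ S := Finset.mem_of_mem_erase (hset ▸ Finset.mem_insert_of_mem (Finset.mem_singleton_self b))
  have ha0 : a ≠ 0 := Finset.ne_of_mem_erase (hset ▸ Finset.mem_insert_self a {b})
  have hb0 : b ≠ 0 := Finset.ne_of_mem_erase (hset ▸ Finset.mem_insert_of_mem (Finset.mem_singleton_self b))
  have habS : a + b ∈ S := hclosed a haS b hbS
  have hab0 : a + b ≠ 0 := fun h => hab (funext fun i => L5 _ _ (congrFun h i))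
  have haba : a + b ≠ a := fun h => hb0 (by
    have := add_eq_left.mp h; exact this)
  have habb : a + b ≠ b := fun h => ha0 (add_eq_right.mp h)
  have hsub : ({0, a, b, a + b} : Finset (Fin 2 → ZMod 2)) ⊆ S := by
    intro x hx
    simp only [Finset.mem_insert, Finset.mem_singleton] at hx
    rcases hx with rfl | rfl | rfl | rfl
    · exact h0
    · exact haS
    · exact hbS
    · exact habS
  have hcard4 : ({0, a, b, a + b} : Finset (Fin 2 → ZMod 2)).card = 4 := by
    rw [Finset.card_insert_of_notMem (by simp [Ne.symm ha0, Ne.symm hb0, Ne.symm hab0]),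
        Finset.card_insert_of_notMem (by simp [hab, Ne.symm haba]),
        Finset.card_insert_of_notMem (by simp [Ne.symm habb]),
        Finset.card_singleton]
  have := Finset.card_le_card hsub
  rw [hcard4, hS] at this
  omega
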